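/- In the bowling model, suppose the line L from waist to shoulder coincides with shoulder axis S_i, i.e., the direction (a_i, b_i, c_i) is proportional to (0, −1, 1). Then there is a linear dependency among the six joint-axis Plücker vectors supported exactly on {S_i, Y, Z}: there exist nonzero reals λ, μ, ν with λ·Y + μ·Z + ν·S_i = 0, and every nontrivial dependency among the six vectors is a multiple of this one. -/

import Mathlib

theorem support_when_shoulder_axis_through_waist (a b c : Fin 3 → ℝ)
    (hli : LinearIndependent ℝ (fun i : Fin 3 => ![a i, b i, c i]))
    (i : Fin 3) (t : ℝ) (ht : t ≠ 0)
    (ha : a i = 0) (hb : b i = -t) (hc : c i = t) :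
    (∃ lam mu nu : ℝ, lam ≠ 0 ∧ mu ≠ 0 ∧ nu ≠ 0 ∧
      lam • (![0,0,0,0,1,0] : Fin 6 → ℝ) + mu • ![0,0,0,0,0,1] +
        nu • ![-(a i), a i, a i, b i + c i, b i, c i] = 0 ∧
      ∀ α β γ : ℝ, ∀ σ : Fin 3 → ℝ,
        α • (![0,0,1,0,0,0] : Fin 6 → ℝ) + β • ![0,0,0,0,1,0] +
          γ • ![0,0,0,0,0,1] +
          ∑ j, σ j • ![-(a j), a j, a j, b j + c j, b j, c j] = 0 →
        ∃ k : ℝ, α = 0 ∧ β = k * lam ∧ γ = k * mu ∧ σ i = k * nu ∧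
          ∀ j, j ≠ i → σ j = 0) := by
  refine ⟨t, -t, 1, ht, neg_ne_zero.mpr ht, one_ne_zero, ?_, ?_⟩
  · funext m
    fin_cases m
    · show t*0 + -t*0 + 1*(-a i) = 0; rw [ha]; ring
    · show t*0 + -t*0 + 1*(a i) = 0; rw [ha]; ring
    · show t*0 + -t*0 + 1*(a i) = 0; rw [ha]; ring
    · show t*0 + -t*0 + 1*(b i + c i) = 0; rw [hb, hc]; ring
    · show t*1 + -t*0 + 1*(b i) = 0; rw [hb]; ring
    · show t*0 + -t*1 + 1*(c i) = 0; rw [hc]; ring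
  · intro α β γ σ h
    rw [Fintype.linearIndependent_iff] at hli
    rw [Fin.sum_univ_three] at h
    have h0 : α*0 + β*0 + γ*0 +
        (σ 0 * -(a 0) + σ 1 * -(a 1) + σ 2 * -(a 2)) = 0 := congrFun h 0
    have h2 : α*1 + β*0 + γ*0 +
        (σ 0 * a 0 + σ 1 * a 1 + σ 2 * a 2) = 0 := congrFun h 2
    have h3 : α*0 + β*0 + γ*0 +
        (σ 0 * (b 0 + c 0) + σ 1 * (b 1 + c 1) + σ 2 * (b 2 + c 2)) = 0 := congrFun h 3
    have h4 : α*0 + β*1 + γ*0 +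
        (σ 0 * b 0 + σ 1 * b 1 + σ 2 * b 2) = 0 := congrFun h 4
    have h5 : α*0 + β*0 + γ*1 +
        (σ 0 * c 0 + σ 1 * c 1 + σ 2 * c 2) = 0 := congrFun h 5
    have hA : ∑ j, σ j * a j = 0 := by rw [Fin.sum_univ_three]; linarith
    have halpha : α = 0 := by rw [Fin.sum_univ_three] at hA; linarith
    have hB : β + ∑ j, σ j * b j = 0 := by rw [Fin.sum_univ_three]; linarith
    have hC : γ + ∑ j, σ j * c j = 0 := by rw [Fin.sum_univ_three]; linarith
    have hBC : (∑ j, σ j * b j) + ∑ j, σ j * c j = 0 := by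
      rw [Fin.sum_univ_three, Fin.sum_univ_three]; linarith
    set C : ℝ := ∑ j, σ j * c j with hCdef
    set d : ℝ := C / t with hddef
    have hg : ∑ j, (σ j - if j = i then d else 0) • ![a j, b j, c j] = 0 := by
      funext m
      rw [Finset.sum_apply]
      fin_cases m
      · simp only [Pi.smul_apply, smul_eq_mul, sub_mul, ite_mul,
          zero_mul, Finset.sum_sub_distrib, Finset.sum_ite_eq', Finset.mem_univ, if_true]
        show (∑ x : Fin 3, σ x * a x) - d * a i = 0
        rw [hA, ha]
        ring
      · simp only [Pi.smul_apply, smul_eq_mul, Matrix.cons_val_one, Matrix.head_cons,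
          sub_mul, ite_mul, zero_mul, Finset.sum_sub_distrib, Finset.sum_ite_eq',
          Finset.mem_univ, if_true]
        show (∑ x : Fin 3, σ x * b x) - d * b i = 0
        have hBv : (∑ j, σ j * b j) = -C := by linarith
        rw [hBv, hb, hddef]
        field_simp
        ring
      · simp only [Pi.smul_apply, smul_eq_mul, sub_mul, ite_mul,
          zero_mul, Finset.sum_sub_distrib, Finset.sum_ite_eq', Finset.mem_univ, if_true]
        show (∑ j, σ j * c j) - d * (![a i, b i, c i] 2) = 0
        rw [hc, ← hCdef]
        show C - C / t * t = 0
        field_simp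
        ring
    have hgz := hli _ hg
    have hji : ∀ j, j ≠ i → σ j = 0 := by
      intro j hj
      have := hgz j
      simpa [hj] using this
    have hsi : σ i = d := by
      have h' := hgz i
      rw [if_pos rfl] at h'
      linarith
    have hCval : C = σ i * t := by
      rw [hCdef]
      rw [Finset.sum_eq_single i]
      · rw [hc]
      · intro j _ hj; rw [hji j hj]; ring
      · intro hmem; exact absurd (Finset.mem_univ i) hmem
    refine ⟨σ i, halpha, ?_, ?_, by ring, hji⟩
    · have hBval : (∑ j, σ j * b j) = -C := by linarith
      have : β = C := by linarith
      rw [this, hCval]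
    · have : γ = -C := by linarith
      rw [this, hCval]; ring
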